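/- Let R^n be a ring, j a vertex with t(j)=1, and let R_{j,2}^n be the path obtained by splitting j into two endpoints j and j', both assigned threshold 2 (all other thresholds unchanged). Then for any TWC target set S' of the path R_{j,2}^n (which necessarily contains j and j'), the set S' \ {j'} (identifying j' with j) is a TWC target set for the ring R^n containing j; conversely, any TWC target set of R^n containing j yields a TWC target set of R_{j,2}^n of size one larger by adding j'. -/

import Mathlib

set_option linter.unusedVariables false

open Finset

variable {V : Type*} [Fintype V] [DecidableEq V]

/-- `influenced G t lam S r` : set of influenced nodes after round `r`. -/
def influenced (G : SimpleGraph V) [DecidableRel G.Adj] (t : V → ℕ) (lam : ℕ)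
    (S : Finset V) : ℕ → Finset V
  | 0 => S
  | r + 1 =>
    let prev := influenced G t lam S r
    let A := if r + 1 ≤ lam then prev else prev \ influenced G t lam S (r - lam)
    prev ∪ Finset.univ.filter fun v => t v ≤ (G.neighborFinset v ∩ A).card
  termination_by r => r
  decreasing_by all_goals omega

/-- `activeSet G t lam S r` : set of active nodes at round `r`. -/
def activeSet (G : SimpleGraph V) [DecidableRel G.Adj] (t : V → ℕ) (lam : ℕ)
    (S : Finset V) (r : ℕ) : Finset V :=
  if r = 0 then ∅
  else if r ≤ lam then influenced G t lam S (r - 1)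
  else influenced G t lam S (r - 1) \ influenced G t lam S (r - 1 - lam)

def isTargetSet (G : SimpleGraph V) [DecidableRel G.Adj] (t : V → ℕ) (lam : ℕ)
    (S : Finset V) : Prop :=
  ∃ r, influenced G t lam S r = Finset.univ

def pathGraph (n : ℕ) : SimpleGraph (Fin n) where
  Adj i j := i.val + 1 = j.val ∨ j.val + 1 = i.val
  symm := ⟨fun i j h => h.symm⟩
  loopless := ⟨fun i h => by rcases h with h | h <;> omega⟩

instance (n : ℕ) : DecidableRel (pathGraph n).Adj :=
  fun i j => inferInstanceAs (Decidable (i.val + 1 = j.val ∨ j.val + 1 = i.val))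

def ringGraph (n : ℕ) : SimpleGraph (Fin n) where
  Adj i j := i ≠ j ∧ ((i.val + 1) % n = j.val ∨ (j.val + 1) % n = i.val)
  symm := ⟨fun i j h => ⟨h.1.symm, h.2.symm⟩⟩
  loopless := ⟨fun i h => h.1 rfl⟩

instance (n : ℕ) : DecidableRel (ringGraph n).Adj :=
  fun i j => inferInstanceAs (Decidable (_ ∧ (_ ∨ _)))

instance : DecidableRel (⊤ : SimpleGraph V).Adj :=
  fun a b => inferInstanceAs (Decidable (a ≠ b))


/-- Thresholds of the path `R_{j,2}^n` obtained by splitting the ring at `j`: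
the two endpoints (positions `0` and `n`, both copies of `j`) get threshold 2,
and position `k` (`0 < k < n`) gets the threshold of ring vertex `j + k`. -/
def splitT (n : ℕ) (t : Fin n → ℕ) (j : Fin n) : Fin (n + 1) → ℕ :=
  fun k => if h : (k : ℕ) = 0 ∨ (k : ℕ) = n then 2
           else t (j + ⟨(k : ℕ), by have := k.isLt; omega⟩)

/-- Map from path positions back to ring vertices (both endpoints map to `j`). -/
def toRing (n : ℕ) (hn : 0 < n) (j : Fin n) : Fin (n + 1) → Fin n :=
  fun k => j + ⟨(k : ℕ) % n, Nat.mod_lt _ hn⟩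

/-- Map from ring vertices to path positions. -/
def toPath (n : ℕ) (j : Fin n) : Fin n → Fin (n + 1) :=
  fun v => ⟨((v - j : Fin n) : ℕ), by have := (v - j).isLt; omega⟩

set_option linter.unusedSectionVars false
set_option maxHeartbeats 1000000

lemma influenced_zero (G : SimpleGraph V) [DecidableRel G.Adj] (t : V → ℕ) (lam : ℕ)
    (S : Finset V) : influenced G t lam S 0 = S := by rw [influenced]

lemma influenced_succ (G : SimpleGraph V) [DecidableRel G.Adj] (t : V → ℕ) (lam : ℕ)
    (S : Finset V) (r : ℕ) :
    influenced G t lam S (r+1) =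
      influenced G t lam S r ∪ Finset.univ.filter (fun v => t v ≤
        (G.neighborFinset v ∩ (if r + 1 ≤ lam then influenced G t lam S r
          else influenced G t lam S r \ influenced G t lam S (r - lam))).card) := by
  rw [influenced]

lemma subset_influenced (G : SimpleGraph V) [DecidableRel G.Adj] (t : V → ℕ) (lam : ℕ)
    (S : Finset V) (r : ℕ) : S ⊆ influenced G t lam S r := by
  induction r with
  | zero => rw [influenced_zero]
  | succ r ih => rw [influenced_succ]; exact ih.trans Finset.subset_union_left

lemma card_pair_inter {a b : V} (hab : a ≠ b) (A : Finset V) :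
    (({a, b} : Finset V) ∩ A).card =
      (if a ∈ A then 1 else 0) + (if b ∈ A then 1 else 0) := by
  rw [← Finset.filter_mem_eq_inter, Finset.filter_insert, Finset.filter_singleton]
  by_cases ha : a ∈ A <;> by_cases hb : b ∈ A <;>
    simp [ha, hb, Finset.card_insert_of_notMem, hab]

lemma mod2' (x n : ℕ) (h0 : 0 < n) (h1 : x < 2*n) :
    (x < n ∧ x % n = x) ∨ (n ≤ x ∧ x % n = x - n) := by
  rcases Nat.lt_or_ge x n with h | h
  · exact Or.inl ⟨h, Nat.mod_eq_of_lt h⟩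
  · exact Or.inr ⟨h, by rw [Nat.mod_eq_sub_mod h, Nat.mod_eq_of_lt (by omega)]⟩

lemma ring_nbr {n : ℕ} (hn : 3 ≤ n) (v : Fin n) :
    (ringGraph n).neighborFinset v =
      {⟨(n - 1 + v.val) % n, Nat.mod_lt _ (by omega)⟩,
       ⟨(v.val + 1) % n, Nat.mod_lt _ (by omega)⟩} := by
  ext m
  have hv := v.isLt; have hm := m.isLt
  rw [SimpleGraph.mem_neighborFinset]
  have h2 := mod2' (m.val + 1) n (by omega) (by omega)
  have h3 := mod2' (n - 1 + v.val) n (by omega) (by omega)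
  have h4 := mod2' (v.val + 1) n (by omega) (by omega)
  constructor
  · rintro ⟨hne, h | h⟩ <;>
    · have hne' : v.val ≠ m.val := fun hh => hne (Fin.ext hh)
      simp only [Finset.mem_insert, Finset.mem_singleton, Fin.ext_iff]
      omega
  · intro h
    simp only [Finset.mem_insert, Finset.mem_singleton, Fin.ext_iff] at h
    refine ⟨fun hc => ?_, ?_⟩
    · rw [Fin.ext_iff] at hc; omega
    · show (v.val + 1) % n = m.val ∨ (m.val + 1) % n = v.val
      omega

lemma ring_nbr_ne {n : ℕ} (hn : 3 ≤ n) (v : Fin n) :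
    (⟨(n - 1 + v.val) % n, Nat.mod_lt _ (by omega)⟩ : Fin n) ≠
      ⟨(v.val + 1) % n, Nat.mod_lt _ (by omega)⟩ := by
  have hv := v.isLt
  have h3 := mod2' (n - 1 + v.val) n (by omega) (by omega)
  have h4 := mod2' (v.val + 1) n (by omega) (by omega)
  intro hc
  rw [Fin.mk.injEq] at hc
  omega

lemma path_nbr_mid {n : ℕ} (hn : 3 ≤ n) (k : Fin (n+1)) (h0 : 0 < k.val) (h1 : k.val < n) :
    (pathGraph (n+1)).neighborFinset k =
      {⟨k.val - 1, by omega⟩, ⟨k.val + 1, by omega⟩} := by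
  ext m
  have hm := m.isLt
  rw [SimpleGraph.mem_neighborFinset]
  constructor
  · intro h
    have h' : k.val + 1 = m.val ∨ m.val + 1 = k.val := h
    simp only [Finset.mem_insert, Finset.mem_singleton, Fin.ext_iff]
    omega
  · intro h
    simp only [Finset.mem_insert, Finset.mem_singleton, Fin.ext_iff] at h
    show k.val + 1 = m.val ∨ m.val + 1 = k.val
    omega

lemma path_end_card {n : ℕ} (hn : 3 ≤ n) (m : Fin (n+1)) (hm : m.val = 0 ∨ m.val = n)
    (A : Finset (Fin (n+1))) : ((pathGraph (n+1)).neighborFinset m ∩ A).card ≤ 1 := by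
  have hsub : (pathGraph (n+1)).neighborFinset m ∩ A ⊆
      {(⟨if m.val = 0 then 1 else n-1, by split <;> omega⟩ : Fin (n+1))} := by
    intro x hx
    have hx1 := (Finset.mem_inter.mp hx).1
    rw [SimpleGraph.mem_neighborFinset] at hx1
    have h' : m.val + 1 = x.val ∨ x.val + 1 = m.val := hx1
    have := x.isLt
    simp only [Finset.mem_singleton, Fin.ext_iff]
    split <;> omega
  calc ((pathGraph (n+1)).neighborFinset m ∩ A).card ≤ _ := Finset.card_le_card hsub
    _ = 1 := Finset.card_singleton _

lemma endpoint_mem {n lam : ℕ} (hn : 3 ≤ n) (t' : Fin (n+1) → ℕ)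
    (S' : Finset (Fin (n+1))) (m : Fin (n+1)) (hm : m.val = 0 ∨ m.val = n)
    (ht' : t' m = 2) (r : ℕ)
    (h : m ∈ influenced (pathGraph (n+1)) t' lam S' r) : m ∈ S' := by
  induction r with
  | zero => rwa [influenced_zero] at h
  | succ r ih =>
      rw [influenced_succ] at h
      rcases Finset.mem_union.mp h with h | h
      · exact ih h
      · exfalso
        have h2 := (Finset.mem_filter.mp h).2
        have hc := path_end_card hn m hm
          (if r + 1 ≤ lam then influenced (pathGraph (n+1)) t' lam S' r
            else influenced (pathGraph (n+1)) t' lam S' r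
              \ influenced (pathGraph (n+1)) t' lam S' (r - lam))
        omega

section maps
variable {n : ℕ}

lemma toRing_val (hn : 3 ≤ n) (j : Fin n) (k : Fin (n+1)) :
    (toRing n (by omega) j k).val = (j.val + k.val % n) % n := by
  rw [toRing, Fin.add_def]

lemma toPath_val (j : Fin n) (v : Fin n) :
    (toPath n j v).val = (n - j.val + v.val) % n := by
  show (v - j).val = _
  rw [Fin.sub_def]

lemma toRing_zero (hn : 3 ≤ n) (j : Fin n) : toRing n (by omega) j ⟨0, by omega⟩ = j := by
  apply Fin.ext
  rw [toRing_val hn]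
  have := j.isLt
  simp [Nat.mod_eq_of_lt this]

lemma toRing_last (hn : 3 ≤ n) (j : Fin n) : toRing n (by omega) j ⟨n, by omega⟩ = j := by
  apply Fin.ext
  rw [toRing_val hn]
  have := j.isLt
  simp [Nat.mod_self, Nat.mod_eq_of_lt this]

lemma toRing_toPath (hn : 3 ≤ n) (j : Fin n) (v : Fin n) : toRing n (by omega) j (toPath n j v) = v := by
  apply Fin.ext
  rw [toRing_val hn, toPath_val]
  have hj := j.isLt; have hv := v.isLt
  have h1 := mod2' (n - j.val + v.val) n (by omega) (by omega)
  have hd : (n - j.val + v.val) % n < n := by omega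
  have hd2 : (n - j.val + v.val) % n % n = (n - j.val + v.val) % n :=
    Nat.mod_eq_of_lt hd
  rw [hd2]
  have h2 := mod2' (j.val + (n - j.val + v.val) % n) n (by omega) (by omega)
  omega

lemma toPath_toRing (hn : 3 ≤ n) (j : Fin n) (k : Fin (n+1)) (hk : k.val ≠ n) :
    toPath n j (toRing n (by omega) j k) = k := by
  apply Fin.ext
  rw [toPath_val, toRing_val hn]
  have hj := j.isLt; have hk' := k.isLt
  have h0 : k.val % n = k.val := Nat.mod_eq_of_lt (by omega)
  rw [h0]
  have h1 := mod2' (j.val + k.val) n (by omega) (by omega)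
  have h2 := mod2' (n - j.val + (j.val + k.val) % n) n (by omega) (by omega)
  omega

lemma toPath_inj (hn : 3 ≤ n) (j : Fin n) : Function.Injective (toPath n j) := by
  intro a b h
  have := toRing_toPath hn j a
  rw [h, toRing_toPath hn j b] at this
  exact this.symm

lemma toPath_val_lt (j : Fin n) (v : Fin n) : (toPath n j v).val < n := (v - j).isLt

lemma toRing_pred (hn : 3 ≤ n) (j : Fin n) (k : Fin (n+1)) (h0 : 0 < k.val) (h1 : k.val < n) :
    toRing n (by omega) j ⟨k.val - 1, by omega⟩ =
      ⟨(n - 1 + (toRing n (by omega) j k).val) % n, Nat.mod_lt _ (by omega)⟩ := by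
  apply Fin.ext
  rw [toRing_val hn]
  simp only
  rw [toRing_val hn]
  have hj := j.isLt
  have ha : (k.val - 1) % n = k.val - 1 := Nat.mod_eq_of_lt (by omega)
  have hb : k.val % n = k.val := Nat.mod_eq_of_lt (by omega)
  rw [ha, hb]
  have h1 := mod2' (j.val + k.val) n (by omega) (by omega)
  have h2 := mod2' (j.val + (k.val - 1)) n (by omega) (by omega)
  have h3 := mod2' (n - 1 + (j.val + k.val) % n) n (by omega) (by omega)
  omega

lemma toRing_succ (hn : 3 ≤ n) (j : Fin n) (k : Fin (n+1)) (h0 : 0 < k.val) (h1 : k.val < n) :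
    toRing n (by omega) j ⟨k.val + 1, by omega⟩ =
      ⟨((toRing n (by omega) j k).val + 1) % n, Nat.mod_lt _ (by omega)⟩ := by
  apply Fin.ext
  rw [toRing_val hn]
  simp only
  rw [toRing_val hn]
  have hj := j.isLt
  have hb : k.val % n = k.val := Nat.mod_eq_of_lt (by omega)
  rw [hb]
  have h1 := mod2' (j.val + k.val) n (by omega) (by omega)
  have h2 := mod2' (k.val + 1) n (by omega) (by omega)
  have h3 := mod2' (j.val + (k.val + 1) % n) n (by omega) (by omega)
  have h4 := mod2' ((j.val + k.val) % n + 1) n (by omega) (by omega)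
  omega

lemma splitT_mid (hn : 3 ≤ n) (j : Fin n) (t : Fin n → ℕ) (k : Fin (n+1)) (h0 : 0 < k.val) (h1 : k.val < n) :
    splitT n t j k = t (toRing n (by omega) j k) := by
  rw [splitT]
  rw [dif_neg (by omega)]
  congr 1
  apply Fin.ext
  rw [toRing_val hn]
  rw [Fin.add_def]
  simp [Nat.mod_eq_of_lt (show k.val < n by omega)]

lemma splitT_end (j : Fin n) (t : Fin n → ℕ) (k : Fin (n+1)) (hk : k.val = 0 ∨ k.val = n) :
    splitT n t j k = 2 := by
  rw [splitT, dif_pos hk]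

end maps

lemma key {n : ℕ} (lam : ℕ) (hn : 3 ≤ n) (t : Fin n → ℕ)
    (j : Fin n) (S : Finset (Fin n)) (hjS : j ∈ S) (r : ℕ) :
    ∀ m : Fin (n+1),
      (m ∈ influenced (pathGraph (n+1)) (splitT n t j) lam
            (insert (⟨n, by omega⟩ : Fin (n+1)) (S.image (toPath n j))) r
      ↔ toRing n (by omega) j m ∈ influenced (ringGraph n) t lam S r) := by
  induction r using Nat.strong_induction_on with
  | _ r ih =>
  have base : ∀ m : Fin (n+1),
      (m ∈ insert (⟨n, by omega⟩ : Fin (n+1)) (S.image (toPath n j))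
        ↔ toRing n (by omega) j m ∈ S) := by
    intro m
    by_cases hm : m.val = n
    · rw [Finset.mem_insert]
      constructor
      · intro _
        have : m = (⟨n, by omega⟩ : Fin (n+1)) := Fin.ext hm
        rw [this, toRing_last hn]
        exact hjS
      · intro _
        exact Or.inl (Fin.ext hm)
    · rw [Finset.mem_insert]
      constructor
      · rintro (h | h)
        · exact absurd (congrArg Fin.val h) hm
        · obtain ⟨v, hv, hvm⟩ := Finset.mem_image.mp h
          rw [← hvm, toRing_toPath hn]
          exact hv
      · intro h
        right
        exact Finset.mem_image.mpr ⟨_, h, toPath_toRing hn j m hm⟩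
  match r with
  | 0 => rw [influenced_zero, influenced_zero]; exact base
  | r + 1 =>
    intro m
    rw [influenced_succ, influenced_succ]
    simp only [Finset.mem_union, Finset.mem_filter, Finset.mem_univ, true_and]
    have hjprev : j ∈ influenced (ringGraph n) t lam S r :=
      subset_influenced _ _ _ _ _ hjS
    set A' := (if r + 1 ≤ lam
      then influenced (pathGraph (n+1)) (splitT n t j) lam
            (insert (⟨n, by omega⟩ : Fin (n+1)) (S.image (toPath n j))) r
      else influenced (pathGraph (n+1)) (splitT n t j) lam
            (insert (⟨n, by omega⟩ : Fin (n+1)) (S.image (toPath n j))) r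
        \ influenced (pathGraph (n+1)) (splitT n t j) lam
            (insert (⟨n, by omega⟩ : Fin (n+1)) (S.image (toPath n j))) (r - lam)) with hA'def
    set A := (if r + 1 ≤ lam then influenced (ringGraph n) t lam S r
      else influenced (ringGraph n) t lam S r
        \ influenced (ringGraph n) t lam S (r - lam)) with hAdef
    have hA : ∀ k : Fin (n+1), (k ∈ A' ↔ toRing n (by omega) j k ∈ A) := by
      intro k
      rw [hA'def, hAdef]
      by_cases hr : r + 1 ≤ lam
      · rw [if_pos hr, if_pos hr]
        exact ih r (by omega) k
      · rw [if_neg hr, if_neg hr, Finset.mem_sdiff, Finset.mem_sdiff,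
          ih r (by omega) k, ih (r - lam) (by omega) k]
    by_cases hm : m.val = 0 ∨ m.val = n
    · have hpsi : toRing n (by omega) j m = j := by
        rcases hm with h | h
        · have : m = ⟨0, by omega⟩ := Fin.ext h
          rw [this, toRing_zero hn]
        · have : m = ⟨n, by omega⟩ := Fin.ext h
          rw [this, toRing_last hn]
      constructor
      · intro _
        left
        rw [hpsi]
        exact hjprev
      · intro _
        left
        rw [ih r (by omega) m, hpsi]
        exact hjprev
    · push_neg at hm
      have hm0 : 0 < m.val := Nat.pos_of_ne_zero hm.1
      have hm1 : m.val < n := by have := m.isLt; omega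
      have hsplit := splitT_mid hn j t m hm0 hm1
      have hcards :
          ((pathGraph (n+1)).neighborFinset m ∩ A').card =
          ((ringGraph n).neighborFinset (toRing n (by omega) j m) ∩ A).card := by
        have e1 : ((⟨m.val - 1, by omega⟩ : Fin (n+1)) ∈ A') ↔
            ((⟨(n - 1 + (toRing n (by omega) j m).val) % n,
              Nat.mod_lt _ (by omega)⟩ : Fin n) ∈ A) := by
          rw [hA ⟨m.val - 1, by omega⟩, toRing_pred hn j m hm0 hm1]
        have e2 : ((⟨m.val + 1, by omega⟩ : Fin (n+1)) ∈ A') ↔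
            ((⟨((toRing n (by omega) j m).val + 1) % n,
              Nat.mod_lt _ (by omega)⟩ : Fin n) ∈ A) := by
          rw [hA ⟨m.val + 1, by omega⟩, toRing_succ hn j m hm0 hm1]
        rw [path_nbr_mid hn m hm0 hm1, ring_nbr hn]
        rw [card_pair_inter (by intro hc; rw [Fin.mk.injEq] at hc; omega) A',
            card_pair_inter (ring_nbr_ne hn _) A]
        simp only [e1, e2]
      rw [hsplit, hcards, ih r (by omega) m]

lemma toRing_end {n : ℕ} (hn : 3 ≤ n) (j : Fin n) (k : Fin (n+1))
    (hk : k.val = 0 ∨ k.val = n) : toRing n (by omega) j k = j := by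
  apply Fin.ext
  rw [toRing_val hn]
  have := j.isLt
  rcases hk with h | h <;> rw [h]
  · simp [Nat.mod_eq_of_lt this]
  · simp [Nat.mod_self, Nat.mod_eq_of_lt this]

lemma toPath_self {n : ℕ} (hn : 3 ≤ n) (j : Fin n) :
    toPath n j j = ⟨0, by omega⟩ := by
  apply Fin.ext
  rw [toPath_val]
  have := j.isLt
  have h1 : n - j.val + j.val = n := by omega
  rw [h1, Nat.mod_self]

theorem stmt16' (n lam : ℕ) (hn : 3 ≤ n) (hlam : 1 ≤ lam) (t : Fin n → ℕ)
    (htv : ∀ v, t v = 1 ∨ t v = 2) (j : Fin n) (hj : t j = 1) :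
    (∀ S' : Finset (Fin (n + 1)),
      isTargetSet (pathGraph (n + 1)) (splitT n t j) lam S' →
        isTargetSet (ringGraph n) t lam (S'.image (toRing n (Nat.lt_of_lt_of_le (by decide) hn) j)) ∧
        j ∈ S'.image (toRing n (Nat.lt_of_lt_of_le (by decide) hn) j) ∧
        (S'.image (toRing n (Nat.lt_of_lt_of_le (by decide) hn) j)).card = S'.card - 1) ∧
    (∀ S : Finset (Fin n), isTargetSet (ringGraph n) t lam S → j ∈ S →
      isTargetSet (pathGraph (n + 1)) (splitT n t j) lam
        (insert (⟨n, Nat.lt_succ_self n⟩ : Fin (n + 1)) (S.image (toPath n j))) ∧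
      (insert (⟨n, Nat.lt_succ_self n⟩ : Fin (n + 1)) (S.image (toPath n j))).card
        = S.card + 1) := by
  constructor
  · rintro S' ⟨r, hr⟩
    have h0mem : (⟨0, by omega⟩ : Fin (n+1)) ∈ S' :=
      endpoint_mem hn (splitT n t j) S' ⟨0, by omega⟩ (Or.inl rfl)
        (splitT_end j t _ (Or.inl rfl)) r (hr ▸ Finset.mem_univ _)
    have hnmem : (⟨n, by omega⟩ : Fin (n+1)) ∈ S' :=
      endpoint_mem hn (splitT n t j) S' ⟨n, by omega⟩ (Or.inr rfl)
        (splitT_end j t _ (Or.inr rfl)) r (hr ▸ Finset.mem_univ _)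
    have hjmem : j ∈ S'.image (toRing n (by omega) j) :=
      Finset.mem_image.mpr ⟨⟨n, by omega⟩, hnmem, toRing_last hn j⟩
    have hFS : insert (⟨n, by omega⟩ : Fin (n+1))
        ((S'.image (toRing n (by omega) j)).image (toPath n j)) = S' := by
      ext k
      simp only [Finset.mem_insert, Finset.mem_image]
      constructor
      · rintro (h | ⟨v, ⟨k', hk', rfl⟩, rfl⟩)
        · rw [h]; exact hnmem
        · by_cases hkn : k'.val = n
          · rw [toRing_end hn j k' (Or.inr hkn), toPath_self hn]
            exact h0mem
          · rw [toPath_toRing hn j k' hkn]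
            exact hk'
      · intro hk
        by_cases hkn : k.val = n
        · exact Or.inl (Fin.ext hkn)
        · exact Or.inr ⟨toRing n (by omega) j k, ⟨k, hk, rfl⟩,
            toPath_toRing hn j k hkn⟩
    refine ⟨⟨r, ?_⟩, hjmem, ?_⟩
    · rw [Finset.eq_univ_iff_forall]
      intro v
      have hk := (key lam hn t j (S'.image (toRing n (by omega) j)) hjmem r
        (toPath n j v)).mp
      rw [hFS] at hk
      have := hk (hr ▸ Finset.mem_univ _)
      rwa [toRing_toPath hn j v] at this
    · have himg : S'.image (toRing n (by omega) j)
          = (S'.erase ⟨n, by omega⟩).image (toRing n (by omega) j) := by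
        ext x
        simp only [Finset.mem_image, Finset.mem_erase]
        constructor
        · rintro ⟨k, hk, rfl⟩
          by_cases hkn : k.val = n
          · refine ⟨⟨0, by omega⟩, ⟨fun hc => by
              have := congrArg Fin.val hc
              simp only at this
              omega, h0mem⟩, ?_⟩
            rw [toRing_end hn j k (Or.inr hkn), toRing_end hn j _ (Or.inl rfl)]
          · exact ⟨k, ⟨fun hc => hkn (by rw [hc]), hk⟩, rfl⟩
        · rintro ⟨k, ⟨_, hk⟩, rfl⟩
          exact ⟨k, hk, rfl⟩
      rw [himg, Finset.card_image_of_injOn, Finset.card_erase_of_mem hnmem]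
      intro a ha b hb heq
      have han : a.val ≠ n := fun hc =>
        (Finset.mem_erase.mp ha).1 (Fin.ext hc)
      have hbn : b.val ≠ n := fun hc =>
        (Finset.mem_erase.mp hb).1 (Fin.ext hc)
      rw [← toPath_toRing hn j a han, ← toPath_toRing hn j b hbn, heq]
  · rintro S ⟨r, hr⟩ hjS
    constructor
    · refine ⟨r, ?_⟩
      rw [Finset.eq_univ_iff_forall]
      intro m
      exact (key lam hn t j S hjS r m).mpr (hr ▸ Finset.mem_univ _)
    · have hnot : (⟨n, by omega⟩ : Fin (n+1)) ∉ S.image (toPath n j) := by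
        intro h
        obtain ⟨v, _, hv⟩ := Finset.mem_image.mp h
        have hlt := toPath_val_lt j v
        rw [hv] at hlt
        simp only at hlt
        omega
      rw [Finset.card_insert_of_notMem hnot,
        Finset.card_image_of_injective _ (toPath_inj hn j)]

/-- splitting the ring at a threshold-1 vertex `j`.  Any TWC target
set `S'` of the path `R_{j,2}^n` projects (identifying `j'` with `j`) to a TWC
target set of the ring containing `j`, of size `|S'| − 1`; conversely any TWC
target set of the ring containing `j` lifts, by adding the endpoint `j'`, to a
TWC target set of the path of size one larger. -/
theorem stmt16 (n lam : ℕ) (hn : 3 ≤ n) (hlam : 1 ≤ lam) (t : Fin n → ℕ)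
    (htv : ∀ v, t v = 1 ∨ t v = 2) (j : Fin n) (hj : t j = 1) :
    (∀ S' : Finset (Fin (n + 1)),
      isTargetSet (pathGraph (n + 1)) (splitT n t j) lam S' →
        isTargetSet (ringGraph n) t lam (S'.image (toRing n (by omega) j)) ∧
        j ∈ S'.image (toRing n (by omega) j) ∧
        (S'.image (toRing n (by omega) j)).card = S'.card - 1) ∧
    (∀ S : Finset (Fin n), isTargetSet (ringGraph n) t lam S → j ∈ S →
      isTargetSet (pathGraph (n + 1)) (splitT n t j) lam
        (insert (⟨n, by omega⟩ : Fin (n + 1)) (S.image (toPath n j))) ∧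
      (insert (⟨n, by omega⟩ : Fin (n + 1)) (S.image (toPath n j))).card
        = S.card + 1) := by
  exact stmt16' n lam hn hlam t htv j hj
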